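/- The dynamic programming recursion c(Z(N)) = min over feedback edges (y_b,u_a) covering N of [P_{ab} + Σ over root nodes M of the subtrees of Forest(N,(y_b,u_a)) of c(Z(M))] computes the minimum cost of a feedback edge set covering Tree(N), for every node N of the arborescence (leaves as base case with empty forest). -/

import Mathlib

section
variable {V β : Type*}

/-- The edge relation of an arborescence with root `r` and parent map `par`:
there is an edge from each node to each of its (non-root) children. -/
def treeEdge (par : V → V) (r : V) (a b : V) : Prop := b ≠ r ∧ par b = a

/-- A feedback edge `e`, whose input attaches to the SCC-node `ain e` and
whose output attaches to the SCC-node `aout e`, covers the node `N` of the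
arborescence iff `ain e` is an ancestor of `N` and `aout e` is a descendant
of `N` (so that adding the edge puts `N` on a directed cycle). -/
def covers (par : V → V) (r : V) (ain aout : β → V) (e : β) (N : V) : Prop :=
  Relation.ReflTransGen (treeEdge par r) (ain e) N ∧
    Relation.ReflTransGen (treeEdge par r) N (aout e)

end

open scoped Classical

section
variable {V β : Type*}

/-- The edge set `Z` covers the subtree rooted at `N`. -/
def coversTree (par : V → V) (r : V) (ain aout : β → V)
    (Z : Finset β) (N : V) : Prop :=
  ∀ v : V, Relation.ReflTransGen (treeEdge par r) N v →
    ∃ e ∈ Z, covers par r ain aout e v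

/-- Minimum cost of a feedback edge set (drawn from `F`) covering the subtree
rooted at `N`. -/
noncomputable def minCost (par : V → V) (r : V) (ain aout : β → V)
    (F : Finset β) (c : β → ℝ) (N : V) : ℝ :=
  sInf {cst : ℝ | ∃ Z ⊆ F, coversTree par r ain aout Z N ∧
    cst = ∑ e ∈ Z, c e}

/-- The roots of the subtrees making up `Forest(N, e)`: the topmost nodes of
`Tree(N)` not covered by the feedback edge `e` (their parent is covered). -/
noncomputable def forestRoots [Fintype V] (par : V → V) (r : V)
    (ain aout : β → V) (N : V) (e : β) : Finset V :=
  Finset.univ.filter fun M =>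
    Relation.ReflTransGen (treeEdge par r) N M ∧
      ¬ covers par r ain aout e M ∧ covers par r ain aout e (par M)

end


section Aux
variable {V β : Type*}

private lemma reach_pow {par : V → V} {r : V} {a x : V}
    (h : Relation.ReflTransGen (treeEdge par r) a x) : ∃ n, par^[n] x = a := by
  induction h with
  | refl => exact ⟨0, rfl⟩
  | tail _ h2 ih =>
    obtain ⟨n, hn⟩ := ih
    exact ⟨n + 1, by rw [Function.iterate_succ_apply, h2.2, hn]⟩

private lemma ne_root_of_reach {par : V → V} {r : V} {a x : V}
    (h : Relation.ReflTransGen (treeEdge par r) a x) : a = x ∨ x ≠ r := by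
  induction h with
  | refl => exact Or.inl rfl
  | tail _ h2 _ => exact Or.inr h2.1

private lemma pow_root {par : V → V} {r : V} (hroot : par r = r) :
    ∀ n, par^[n] r = r := by
  intro n
  induction n with
  | zero => rfl
  | succ n ih => rw [Function.iterate_succ_apply', ih, hroot]

private lemma reach_antisymm {par : V → V} {r : V} (hroot : par r = r)
    (hreach : ∀ v : V, ∃ n : ℕ, par^[n] v = r) {a b : V}
    (hab : Relation.ReflTransGen (treeEdge par r) a b)
    (hba : Relation.ReflTransGen (treeEdge par r) b a) : a = b := by
  obtain ⟨m, hm⟩ := reach_pow hab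
  obtain ⟨n, hn⟩ := reach_pow hba
  rcases Nat.eq_zero_or_pos (m + n) with hmn | hmn
  · obtain ⟨hm0, hn0⟩ := Nat.add_eq_zero.mp hmn
    subst hm0
    exact hm.symm
  · have hper : par^[m + n] a = a := by
      rw [Function.iterate_add_apply, hn, hm]
    have hperk : ∀ t, par^[(m + n) * t] a = a := by
      intro t
      induction t with
      | zero => rfl
      | succ t ih =>
        rw [Nat.mul_succ, Function.iterate_add_apply, hper, ih]
    obtain ⟨k, hk⟩ := hreach a
    have hkle : k ≤ (m + n) * k := Nat.le_mul_of_pos_left k hmn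
    have har : a = r := by
      have h1 : par^[(m + n) * k] a = a := hperk k
      have h2 : par^[(m + n) * k] a = par^[(m + n) * k - k] (par^[k] a) := by
        rw [← Function.iterate_add_apply, Nat.sub_add_cancel hkle]
      rw [h2, hk, pow_root hroot] at h1
      exact h1.symm
    subst har
    rcases ne_root_of_reach hba with h | h
    · exact h.symm
    · exact absurd rfl h

private lemma reach_comparable {par : V → V} {r : V} {a x : V}
    (h1 : Relation.ReflTransGen (treeEdge par r) a x) :
    ∀ b, Relation.ReflTransGen (treeEdge par r) b x →
      Relation.ReflTransGen (treeEdge par r) a b ∨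
        Relation.ReflTransGen (treeEdge par r) b a := by
  induction h1 with
  | refl => exact fun b hb => Or.inr hb
  | @tail w d h1 h2 ih =>
    intro b hb
    rcases Relation.ReflTransGen.cases_tail hb with heq | ⟨w', hbw', hw'⟩
    · subst heq
      exact Or.inl (h1.tail h2)
    · have : w' = w := by rw [← hw'.2, h2.2]
      subst this
      exact ih b hbw'

/-- sum over insert bounded by nonneg pieces -/
private lemma sum_insert_le' (a : β) (s : Finset β) (f : β → ℝ) (hf : ∀ x, 0 ≤ f x) :
    ∑ x ∈ insert a s, f x ≤ f a + ∑ x ∈ s, f x := by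
  by_cases h : a ∈ s
  · rw [Finset.insert_eq_self.mpr h]
    exact le_add_of_nonneg_left (hf a)
  · rw [Finset.sum_insert h]

private lemma sum_biUnion_le' (s : Finset V) (t : V → Finset β) (f : β → ℝ)
    (hf : ∀ x, 0 ≤ f x) :
    ∑ x ∈ s.biUnion t, f x ≤ ∑ i ∈ s, ∑ x ∈ t i, f x := by
  induction s using Finset.induction_on with
  | empty => simp
  | @insert a s ha ih =>
    rw [Finset.biUnion_insert, Finset.sum_insert ha]
    calc ∑ x ∈ t a ∪ s.biUnion t, f x
        ≤ (∑ x ∈ t a ∪ s.biUnion t, f x) + ∑ x ∈ t a ∩ s.biUnion t, f x :=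
          le_add_of_nonneg_right (Finset.sum_nonneg fun x _ => hf x)
      _ = (∑ x ∈ t a, f x) + ∑ x ∈ s.biUnion t, f x := Finset.sum_union_inter
      _ ≤ (∑ x ∈ t a, f x) + ∑ i ∈ s, ∑ x ∈ t i, f x := add_le_add_right ih _

/-- the set of achievable covering costs is finite -/
private lemma costSet_finite (par : V → V) (r : V) (ain aout : β → V)
    (F : Finset β) (c : β → ℝ) (N : V) :
    {cst : ℝ | ∃ Z ⊆ F, coversTree par r ain aout Z N ∧
      cst = ∑ e ∈ Z, c e}.Finite := by
  apply Set.Finite.subset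
    (Set.Finite.image (fun Z : Finset β => ∑ e ∈ Z, c e) F.powerset.finite_toSet)
  rintro x ⟨Z, hZF, _, rfl⟩
  exact ⟨Z, by simpa [Finset.mem_powerset] using hZF, rfl⟩

/-- the minimum cost is attained -/
private lemma minCost_spec (par : V → V) (r : V) (ain aout : β → V)
    (F : Finset β) (c : β → ℝ)
    (hfeas : ∀ v : V, ∃ e ∈ F, covers par r ain aout e v) (N : V) :
    ∃ Z, Z ⊆ F ∧ coversTree par r ain aout Z N ∧
      minCost par r ain aout F c N = ∑ e ∈ Z, c e := by
  have hne : {cst : ℝ | ∃ Z ⊆ F, coversTree par r ain aout Z N ∧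
      cst = ∑ e ∈ Z, c e}.Nonempty :=
    ⟨∑ e ∈ F, c e, F, le_refl F, fun v _ => hfeas v, rfl⟩
  have h := hne.csInf_mem (costSet_finite par r ain aout F c N)
  obtain ⟨Z, hZF, hZc, hZv⟩ := h
  exact ⟨Z, hZF, hZc, hZv⟩

private lemma minCost_le (par : V → V) (r : V) (ain aout : β → V)
    (F : Finset β) (c : β → ℝ) (N : V) (Z : Finset β) (hZF : Z ⊆ F)
    (hZ : coversTree par r ain aout Z N) :
    minCost par r ain aout F c N ≤ ∑ e ∈ Z, c e :=
  csInf_le (costSet_finite par r ain aout F c N).bddBelow ⟨Z, hZF, hZ, rfl⟩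

/-- decomposition of the uncovered part of the subtree into forests -/
private lemma forest_decomp [Fintype V] (par : V → V) (r : V)
    (ain aout : β → V) (e : β) {N v : V}
    (hN : covers par r ain aout e N)
    (hv : Relation.ReflTransGen (treeEdge par r) N v)
    (hnc : ¬ covers par r ain aout e v) :
    ∃ M ∈ forestRoots par r ain aout N e,
      Relation.ReflTransGen (treeEdge par r) M v := by
  revert hnc
  induction hv with
  | refl => exact fun hnc => absurd hN hnc
  | @tail b d h1 h2 ih =>
    intro hnd
    by_cases hb : covers par r ain aout e b
    · refine ⟨d, ?_, Relation.ReflTransGen.refl⟩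
      simp only [forestRoots, Finset.mem_filter, Finset.mem_univ, true_and]
      exact ⟨h1.tail h2, hnd, by rw [h2.2]; exact hb⟩
    · obtain ⟨M, hM, hMb⟩ := ih hb
      exact ⟨M, hM, hMb.tail h2⟩

/-- a forest root is not the root of the tree -/
private lemma forest_root_ne_root [Fintype V] {par : V → V} {r : V}
    (hroot : par r = r) {ain aout : β → V} {e : β} {N M : V}
    (hM : M ∈ forestRoots par r ain aout N e) : M ≠ r := by
  simp only [forestRoots, Finset.mem_filter, Finset.mem_univ, true_and] at hM
  intro h
  subst h
  rw [hroot] at hM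
  exact hM.2.1 hM.2.2

/-- `ain e` is an ancestor of every forest root -/
private lemma ain_reach_forest_root [Fintype V] {par : V → V} {r : V}
    (hroot : par r = r) {ain aout : β → V} {e : β} {N M : V}
    (hM : M ∈ forestRoots par r ain aout N e) :
    Relation.ReflTransGen (treeEdge par r) (ain e) M := by
  have hMr := forest_root_ne_root hroot hM
  simp only [forestRoots, Finset.mem_filter, Finset.mem_univ, true_and] at hM
  exact hM.2.2.1.tail ⟨hMr, rfl⟩

/-- `aout e` is not in the subtree of any forest root -/
private lemma not_reach_aout [Fintype V] {par : V → V} {r : V}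
    (hroot : par r = r) {ain aout : β → V} {e : β} {N M : V}
    (hM : M ∈ forestRoots par r ain aout N e) :
    ¬ Relation.ReflTransGen (treeEdge par r) M (aout e) := by
  intro h
  have h1 := ain_reach_forest_root hroot hM
  simp only [forestRoots, Finset.mem_filter, Finset.mem_univ, true_and] at hM
  exact hM.2.1 ⟨h1, h⟩

/-- subtrees of distinct forest roots are disjoint -/
private lemma forest_roots_disjoint [Fintype V] {par : V → V} {r : V}
    (hroot : par r = r) (hreach : ∀ v : V, ∃ n : ℕ, par^[n] v = r)
    {ain aout : β → V} {e : β} {N M₁ M₂ : V}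
    (h1 : M₁ ∈ forestRoots par r ain aout N e)
    (h2 : M₂ ∈ forestRoots par r ain aout N e) (hne : M₁ ≠ M₂) {x : V}
    (hx1 : Relation.ReflTransGen (treeEdge par r) M₁ x)
    (hx2 : Relation.ReflTransGen (treeEdge par r) M₂ x) : False := by
  -- first a one-sided claim
  have key : ∀ M₁ M₂ : V, M₁ ∈ forestRoots par r ain aout N e →
      M₂ ∈ forestRoots par r ain aout N e → M₁ ≠ M₂ →
      Relation.ReflTransGen (treeEdge par r) M₁ M₂ → False := by
    intro M₁ M₂ h1 h2 hne h12
    have hr2 := forest_root_ne_root hroot h2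
    have hr1 := forest_root_ne_root hroot h1
    simp only [forestRoots, Finset.mem_filter, Finset.mem_univ, true_and] at h1 h2
    rcases Relation.ReflTransGen.cases_tail h12 with heq | ⟨w, hw, hww⟩
    · exact hne heq.symm
    · -- w = par M₂
      have hwp : w = par M₂ := hww.2.symm
      subst hwp
      -- M₁ reaches aout e through par M₂
      have hMout : Relation.ReflTransGen (treeEdge par r) M₁ (aout e) :=
        hw.trans h2.2.2.2
      -- compare ain e and M₁, both ancestors of par M₂
      rcases reach_comparable h2.2.2.1 M₁ hw with hin | hin
      · exact h1.2.1 ⟨hin, hMout⟩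
      · -- M₁ reaches ain e, ain e reaches par M₁, so M₁ = par M₁
        have h3 : Relation.ReflTransGen (treeEdge par r) M₁ (par M₁) :=
          hin.trans h1.2.2.1
        have h4 : Relation.ReflTransGen (treeEdge par r) (par M₁) M₁ :=
          Relation.ReflTransGen.single ⟨hr1, rfl⟩
        have h5 : M₁ = par M₁ := reach_antisymm hroot hreach h3 h4
        exact h1.2.1 (h5 ▸ h1.2.2)
  rcases reach_comparable hx1 M₂ hx2 with h | h
  · exact key M₁ M₂ h1 h2 hne h
  · exact key M₂ M₁ h2 h1 (Ne.symm hne) h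

end Aux

/-- The dynamic programming recursion
`c(Z(N)) = min over feedback edges e = (y_b,u_a) covering N of
[P_{ab} + Σ over the roots M of the subtrees of Forest(N,e) of c(Z(M))]`
computes the minimum cost of a feedback edge set covering `Tree(N)`, for
every node `N` of the arborescence (for leaves the forest is empty and the
sum vanishes). -/
theorem stmt_16 {V β : Type*} [Fintype V] (par : V → V) (r : V)
    (hroot : par r = r) (hreach : ∀ v : V, ∃ n : ℕ, par^[n] v = r)
    (ain aout : β → V)
    (F : Finset β) (c : β → ℝ) (hc : ∀ e, 0 ≤ c e)
    -- feasibility: every node is covered by some feasible feedback edge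
    (hfeas : ∀ v : V, ∃ e ∈ F, covers par r ain aout e v) :
    ∀ N : V,
      minCost par r ain aout F c N =
        sInf {cst : ℝ | ∃ e ∈ F, covers par r ain aout e N ∧
          cst = c e + ∑ M ∈ forestRoots par r ain aout N e,
            minCost par r ain aout F c M} := by
  intro N
  set T : Set ℝ := {cst : ℝ | ∃ e ∈ F, covers par r ain aout e N ∧
      cst = c e + ∑ M ∈ forestRoots par r ain aout N e,
        minCost par r ain aout F c M} with hT
  have hTne : T.Nonempty := by
    obtain ⟨e, heF, hecov⟩ := hfeas N
    exact ⟨_, e, heF, hecov, rfl⟩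
  have hTfin : T.Finite := by
    apply Set.Finite.subset (Set.Finite.image
      (fun e : β => c e + ∑ M ∈ forestRoots par r ain aout N e,
        minCost par r ain aout F c M) F.finite_toSet)
    rintro x ⟨e, heF, _, rfl⟩
    exact ⟨e, heF, rfl⟩
  apply le_antisymm
  · -- minCost ≤ sInf T : exhibit a covering set realizing the optimal rhs value
    obtain ⟨e, heF, hecov, hval⟩ := hTne.csInf_mem hTfin
    choose ZM hZMF hZMc hZMval using minCost_spec par r ain aout F c hfeas
    set B := (forestRoots par r ain aout N e).biUnion ZM with hB
    have hZF : insert e B ⊆ F := by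
      refine Finset.insert_subset heF ?_
      exact Finset.biUnion_subset.mpr fun M _ => hZMF M
    have hcov : coversTree par r ain aout (insert e B) N := by
      intro v hv
      by_cases hce : covers par r ain aout e v
      · exact ⟨e, Finset.mem_insert_self _ _, hce⟩
      · obtain ⟨M, hM, hMv⟩ := forest_decomp par r ain aout e hecov hv hce
        obtain ⟨e', he', he'cov⟩ := hZMc M v hMv
        exact ⟨e', Finset.mem_insert_of_mem (Finset.mem_biUnion.mpr ⟨M, hM, he'⟩),
          he'cov⟩
    calc minCost par r ain aout F c N ≤ ∑ e' ∈ insert e B, c e' :=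
          minCost_le par r ain aout F c N _ hZF hcov
      _ ≤ c e + ∑ e' ∈ B, c e' := sum_insert_le' e B c hc
      _ ≤ c e + ∑ M ∈ forestRoots par r ain aout N e, ∑ e' ∈ ZM M, c e' :=
          add_le_add_right (sum_biUnion_le' _ ZM c hc) _
      _ = c e + ∑ M ∈ forestRoots par r ain aout N e,
            minCost par r ain aout F c M := by
          rw [Finset.sum_congr rfl fun M _ => (hZMval M).symm]
      _ = sInf T := hval.symm
  · -- sInf T ≤ minCost : from an optimal cover extract an edge covering N
    obtain ⟨Z, hZF, hZc, hval⟩ := minCost_spec par r ain aout F c hfeas N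
    obtain ⟨e, heZ, hecov⟩ := hZc N Relation.ReflTransGen.refl
    set ZM : V → Finset β := fun M =>
      Z.filter fun e' => Relation.ReflTransGen (treeEdge par r) M (aout e') with hZM
    have hZMc : ∀ M ∈ forestRoots par r ain aout N e,
        coversTree par r ain aout (ZM M) M := by
      intro M hM v hv
      have hNM : Relation.ReflTransGen (treeEdge par r) N M := by
        simp only [forestRoots, Finset.mem_filter, Finset.mem_univ, true_and] at hM
        exact hM.1
      obtain ⟨e', he'Z, he'cov⟩ := hZc v (hNM.trans hv)
      refine ⟨e', Finset.mem_filter.mpr ⟨he'Z, hv.trans he'cov.2⟩, he'cov⟩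
    have hstep : sInf T ≤ c e + ∑ M ∈ forestRoots par r ain aout N e,
        minCost par r ain aout F c M :=
      csInf_le hTfin.bddBelow ⟨e, hZF heZ, hecov, rfl⟩
    have hsub : (forestRoots par r ain aout N e).biUnion ZM ⊆ Z.erase e := by
      intro e' he'
      obtain ⟨M, hM, he'M⟩ := Finset.mem_biUnion.mp he'
      have h1 := Finset.mem_filter.mp he'M
      refine Finset.mem_erase.mpr ⟨?_, h1.1⟩
      intro h
      exact not_reach_aout hroot hM (h ▸ h1.2)
    have hdisj : (↑(forestRoots par r ain aout N e) : Set V).PairwiseDisjoint ZM := by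
      intro M₁ hM₁ M₂ hM₂ hne
      simp only [Finset.coe_mem, Finset.mem_coe] at hM₁ hM₂
      refine Finset.disjoint_left.mpr fun e' h1 h2 => ?_
      have hx1 := (Finset.mem_filter.mp h1).2
      have hx2 := (Finset.mem_filter.mp h2).2
      exact forest_roots_disjoint hroot hreach hM₁ hM₂ hne hx1 hx2
    calc sInf T ≤ c e + ∑ M ∈ forestRoots par r ain aout N e,
          minCost par r ain aout F c M := hstep
      _ ≤ c e + ∑ M ∈ forestRoots par r ain aout N e, ∑ e' ∈ ZM M, c e' := by
          refine add_le_add_right (Finset.sum_le_sum fun M hM => ?_) _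
          exact minCost_le par r ain aout F c M (ZM M)
            ((Finset.filter_subset _ _).trans hZF) (hZMc M hM)
      _ = c e + ∑ e' ∈ (forestRoots par r ain aout N e).biUnion ZM, c e' := by
          rw [Finset.sum_biUnion hdisj]
      _ ≤ c e + ∑ e' ∈ Z.erase e, c e' := by
          refine add_le_add_right ?_ _
          exact Finset.sum_le_sum_of_subset_of_nonneg hsub fun x _ _ => hc x
      _ = ∑ e' ∈ Z, c e' := Finset.add_sum_erase Z c heZ
      _ = minCost par r ain aout F c N := hval.symm
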